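/- Let Q(f) = −f^κ + Σ_{α=0}^{κ−1} a_α f^α be a real polynomial of degree κ ≥ 2 whose κ roots are real and distinct, regarded as a polynomial over ℂ. Then every periodic solution of x′ = Q(x) in the complex plane is constant: if x : ℝ → ℂ satisfies x′(t) = Q(x(t)) for all t ∈ ℝ and there exists T > 0 with x(t + T) = x(t) for all t ∈ ℝ, then x is a constant function. -/

import Mathlib

open Polynomial Finset

private lemma log_normSq_deriv {u : ℝ → ℂ} {u' : ℂ} {t : ℝ}
    (hu : HasDerivAt u u' t) (hne : u t ≠ 0) :
    HasDerivAt (fun t => Real.log (Complex.normSq (u t)) / 2) ((u' / u t).re) t := by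
  have hre : HasDerivAt (fun t => (u t).re) u'.re t :=
    Complex.reCLM.hasFDerivAt.comp_hasDerivAt t hu
  have him : HasDerivAt (fun t => (u t).im) u'.im t :=
    Complex.imCLM.hasFDerivAt.comp_hasDerivAt t hu
  have hN : HasDerivAt (fun t => Complex.normSq (u t))
      (u'.re * (u t).re + (u t).re * u'.re + (u'.im * (u t).im + (u t).im * u'.im)) t := by
    simpa [Complex.normSq_apply] using (hre.fun_mul hre).fun_add (him.fun_mul him)
  have hNe : Complex.normSq (u t) ≠ 0 := by
    simpa [Complex.normSq_eq_zero] using hne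
  have := (hN.log hNe).div_const 2
  refine this.congr_deriv ?_
  rw [Complex.div_re]
  have : (0:ℝ) < Complex.normSq (u t) := Complex.normSq_pos.mpr hne
  field_simp
  ring

/-- For a real polynomial `Q(f) = -f^κ + Σ_{α<κ} a_α f^α` of degree `κ ≥ 2`
with `κ` distinct real roots (here `q l`, `l < κ`, strictly decreasing), every periodic
solution of `x' = Q(x)` in the complex plane is constant. -/
theorem zeroHopf_no_cycles
    (κ : ℕ) (hκ : 2 ≤ κ) (a : ℕ → ℝ) (Q : Polynomial ℝ)
    (hQ : Q = -(X ^ κ) + ∑ α ∈ Finset.range κ, C (a α) * X ^ α)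
    (q : ℕ → ℝ)
    (hroot : ∀ l < κ, Q.eval (q l) = 0)
    (hord : ∀ l m : ℕ, l < m → m < κ → q m < q l)
    (x : ℝ → ℂ)
    (hx : ∀ t : ℝ, HasDerivAt x ((Polynomial.aeval (x t)) Q) t)
    (T : ℝ) (hT : 0 < T) (hper : ∀ t : ℝ, x (t + T) = x t) :
    ∃ c : ℂ, ∀ t : ℝ, x t = c := by
  classical
  set v : ℕ → ℂ := fun l => ((q l : ℝ) : ℂ) with hv
  set s : Finset ℕ := Finset.range κ with hs
  have hvinj : Set.InjOn v s := by
    intro l hl m hm h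
    by_contra hne
    have h' : q l = q m := Complex.ofReal_injective h
    rcases lt_or_gt_of_ne hne with hlt | hlt
    · exact absurd h'.symm (ne_of_lt (hord l m hlt (by simpa [hs] using hm)))
    · exact absurd h' (ne_of_lt (hord m l hlt (by simpa [hs] using hl)))
  set Qc : Polynomial ℂ := Q.map (algebraMap ℝ ℂ) with hQc
  have heval : ∀ z : ℂ, (aeval z) Q = Qc.eval z := fun z => by
    rw [aeval_def, hQc, eval_map]
  have hrootC : ∀ l ∈ s, Qc.eval (v l) = 0 := by
    intro l hl
    have : Qc.eval (v l) = algebraMap ℝ ℂ (Q.eval (q l)) := by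
      rw [hQc, eval_map]
      exact eval₂_at_apply (algebraMap ℝ ℂ) (q l)
    rw [this, hroot l (by simpa [hs] using hl)]
    simp
  set R : Polynomial ℂ := ∏ l ∈ s, (X - C (v l)) with hR
  have hRmonic : R.Monic := monic_prod_of_monic _ _ fun l _ => monic_X_sub_C _
  have hRdeg : R.natDegree = κ := by
    rw [hR, natDegree_prod _ _ fun l _ => X_sub_C_ne_zero _]
    simp [natDegree_X_sub_C, hs]
  have hcards : (#s : ℕ) = κ := by simp [hs]
  have hQfact : Qc = -R := by
    have h1 : Qc + R = 0 := by
      apply Polynomial.eq_zero_of_degree_lt_of_eval_index_eq_zero s hvinj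
      · -- degree < #s
        rw [hcards]
        have hd1 : (Qc + X ^ κ).degree < (κ : WithBot ℕ) := by
          have : Qc + X ^ κ = (∑ α ∈ Finset.range κ, C (a α) * X ^ α).map (algebraMap ℝ ℂ) := by
            rw [hQc, hQ, Polynomial.map_add, Polynomial.map_neg, Polynomial.map_pow, map_X]
            ring
          rw [this]
          refine lt_of_le_of_lt (degree_map_le) ?_
          refine lt_of_le_of_lt (degree_sum_le _ _) ?_
          rw [Finset.sup_lt_iff (by exact_mod_cast WithBot.bot_lt_coe κ)]
          intro α hα
          exact lt_of_le_of_lt (degree_C_mul_X_pow_le _ _)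
            (by exact_mod_cast Finset.mem_range.mp hα)
        have hd2 : (R - X ^ κ).degree < (κ : WithBot ℕ) := by
          have hdR : R.degree = (κ : WithBot ℕ) := by
            rw [degree_eq_natDegree hRmonic.ne_zero, hRdeg]
          calc (R - X ^ κ).degree < R.degree := by
                refine degree_sub_lt ?_ hRmonic.ne_zero ?_
                · rw [hdR, degree_X_pow]
                · rw [hRmonic.leadingCoeff, (monic_X_pow κ).leadingCoeff]
            _ = (κ : WithBot ℕ) := hdR
        have : Qc + R = (Qc + X ^ κ) + (R - X ^ κ) := by ring
        rw [this]
        exact lt_of_le_of_lt (degree_add_le _ _) (max_lt hd1 hd2)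
      · intro i hi
        rw [eval_add, hrootC i hi, zero_add, hR, eval_prod]
        exact Finset.prod_eq_zero hi (by simp)
    exact eq_neg_of_add_eq_zero_left h1
  set c : ℕ → ℝ := fun l => -(∏ m ∈ s.erase l, (q l - q m))⁻¹ with hc
  set d : ℕ → ℂ := fun l => (∏ m ∈ s.erase l, (v l - v m))⁻¹ with hd
  have hcd : ∀ l, ((c l : ℝ) : ℂ) = -d l := by
    intro l
    rw [hc, hd]
    push_cast
    simp [hv]
  have hone : (∑ l ∈ s, C (d l) * ∏ m ∈ s.erase l, (X - C (v m))) = (1 : Polynomial ℂ) := by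
    have hz : (∑ l ∈ s, C (d l) * ∏ m ∈ s.erase l, (X - C (v m))) - 1 = 0 := by
      apply Polynomial.eq_zero_of_degree_lt_of_eval_index_eq_zero s hvinj
      · rw [hcards]
        refine lt_of_le_of_lt (degree_sub_le _ _) (max_lt ?_ ?_)
        · refine lt_of_le_of_lt (degree_sum_le _ _) ?_
          rw [Finset.sup_lt_iff (by exact_mod_cast WithBot.bot_lt_coe κ)]
          intro l hl
          refine lt_of_le_of_lt (degree_mul_le _ _) ?_
          have hmon : (∏ m ∈ s.erase l, (X - C (v m))).Monic :=
            monic_prod_of_monic _ _ fun m _ => monic_X_sub_C _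
          have hdeg : (∏ m ∈ s.erase l, (X - C (v m))).natDegree = κ - 1 := by
            rw [natDegree_prod _ _ fun m _ => X_sub_C_ne_zero _]
            simp [Finset.card_erase_of_mem hl, hs, natDegree_X_sub_C]
            rw [Finset.card_erase_of_mem (by simpa [hs] using hl), Finset.card_range]
          calc degree (C (d l)) + (∏ m ∈ s.erase l, (X - C (v m))).degree
              ≤ 0 + ((κ - 1 : ℕ) : WithBot ℕ) := by
                refine add_le_add degree_C_le ?_
                rw [degree_eq_natDegree hmon.ne_zero, hdeg]
            _ = ((κ - 1 : ℕ) : WithBot ℕ) := zero_add _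
            _ < (κ : WithBot ℕ) := by exact_mod_cast Nat.sub_lt (by omega) one_pos
        · exact lt_of_le_of_lt degree_one_le (by exact_mod_cast (by omega : 0 < κ))
      · intro i hi
        rw [eval_sub, eval_one, sub_eq_zero, eval_finset_sum]
        rw [Finset.sum_eq_single i]
        · rw [eval_mul, eval_C, eval_prod]
          simp only [eval_sub, eval_X, eval_C]
          rw [hd]
          refine inv_mul_cancel₀ ?_
          rw [Finset.prod_ne_zero_iff]
          intro m hm
          have hm' : m ∈ s := Finset.mem_of_mem_erase hm
          exact sub_ne_zero.mpr fun h => (Finset.ne_of_mem_erase hm) (hvinj hm' hi h.symm)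
        · intro l hl hli
          rw [eval_mul, eval_prod]
          apply mul_eq_zero_of_right
          refine Finset.prod_eq_zero (Finset.mem_erase.mpr ⟨fun h => hli h.symm, hi⟩) ?_
          simp
        · intro h; exact absurd hi h
    exact sub_eq_zero.mp hz
  have hfrac : ∀ z : ℂ, (∀ l ∈ s, z ≠ v l) →
      (∑ l ∈ s, (c l : ℂ) / (z - v l)) = (Qc.eval z)⁻¹ := by
    intro z hz
    have hzne : ∀ l ∈ s, z - v l ≠ 0 := fun l hl => sub_ne_zero.mpr (hz l hl)
    have hkey : (∑ l ∈ s, d l / (z - v l)) * (∏ m ∈ s, (z - v m)) = 1 := by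
      have he := congrArg (Polynomial.eval z) hone
      rw [eval_finset_sum, eval_one] at he
      rw [Finset.sum_mul, ← he]
      refine Finset.sum_congr rfl fun l hl => ?_
      rw [eval_mul, eval_C, eval_prod]
      simp only [eval_sub, eval_X, eval_C]
      rw [← Finset.mul_prod_erase s _ hl]
      have := hzne l hl
      field_simp
    have hsumd : (∑ l ∈ s, d l / (z - v l)) = (∏ m ∈ s, (z - v m))⁻¹ :=
      eq_inv_of_mul_eq_one_left hkey
    have hQz : Qc.eval z = -(∏ m ∈ s, (z - v m)) := by
      rw [hQfact, hR, eval_neg, eval_prod]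
      simp
    rw [hQz, inv_neg, ← hsumd, ← Finset.sum_neg_distrib]
    refine Finset.sum_congr rfl fun l hl => ?_
    rw [hcd l, neg_div]
  by_cases hA : ∃ t0, ∃ l ∈ s, x t0 = v l
  · -- the solution hits an equilibrium: constant by ODE uniqueness
    obtain ⟨t0, l, hl, hxl⟩ := hA
    refine ⟨v l, fun t => ?_⟩
    have hxc : Continuous x := continuous_iff_continuousAt.mpr fun t => (hx t).continuousAt
    have hper' : Function.Periodic x T := hper
    obtain ⟨r, hr⟩ :=
      ((isCompact_Icc : IsCompact (Set.Icc (0:ℝ) T)).image hxc).isBounded.subset_closedBall 0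
    set Rr : ℝ := max r ‖v l‖ with hRr
    have hmem : ∀ t : ℝ, x t ∈ Metric.closedBall (0:ℂ) Rr := by
      intro t
      obtain ⟨y, hy, hxy⟩ := hper'.exists_mem_Ico₀ hT t
      rw [hxy]
      have hb : x y ∈ Metric.closedBall (0:ℂ) r := hr ⟨y, ⟨hy.1, hy.2.le⟩, rfl⟩
      rw [mem_closedBall_zero_iff] at hb ⊢
      exact hb.trans (le_max_left _ _)
    have hvmem : v l ∈ Metric.closedBall (0:ℂ) Rr := by
      rw [mem_closedBall_zero_iff]; exact le_max_right _ _
    obtain ⟨Cb, hCb⟩ := (isCompact_closedBall (0:ℂ) Rr).exists_bound_of_continuousOn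
      (Qc.derivative.continuous.continuousOn)
    set Knn : NNReal := ⟨max Cb 0, le_max_right _ _⟩ with hKnn
    have hlip : LipschitzOnWith Knn (fun z => Qc.eval z) (Metric.closedBall 0 Rr) := by
      refine (convex_closedBall (0:ℂ) Rr).lipschitzOnWith_of_nnnorm_hasDerivWithin_le
        (f' := fun z => Qc.derivative.eval z)
        (fun z _ => (Qc.hasDerivAt z).hasDerivWithinAt) (fun z hz => ?_)
      rw [← NNReal.coe_le_coe]
      exact (hCb z hz).trans (le_max_left _ _)
    have huniq : ∀ b, t0 ≤ b → x b = v l := by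
      intro b hb
      have heq := ODE_solution_unique_of_mem_Icc_right
        (v := fun _ : ℝ => fun z => Qc.eval z)
        (s := fun _ : ℝ => Metric.closedBall (0:ℂ) Rr) (a := t0) (b := b) (fun _ _ => hlip)
        (hxc.continuousOn)
        (fun t _ => by
          have h' : HasDerivAt x (Qc.eval (x t)) t := by rw [← heval]; exact hx t
          exact h'.hasDerivWithinAt)
        (fun t _ => hmem t)
        (continuousOn_const (c := v l))
        (fun t _ => by
          simpa [hrootC l hl] using (hasDerivAt_const t (v l)).hasDerivWithinAt)
        (fun t _ => hvmem)
        hxl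
      exact heq (Set.right_mem_Icc.mpr hb)
    obtain ⟨n, hn⟩ := exists_nat_ge ((t0 - t) / T)
    have hge : t0 ≤ t + n * T := by
      have := (div_le_iff₀ hT).mp hn
      linarith
    have hx1 : x (t + n * T) = x t := by
      simpa using (hper'.nat_mul n) t
    exact hx1 ▸ huniq _ hge
  · -- the solution never hits a root: derive a contradiction
    exfalso
    push_neg at hA
    have hxne : ∀ t : ℝ, ∀ l ∈ s, x t - v l ≠ 0 := fun t l hl => sub_ne_zero.mpr (hA t l hl)
    have hQx : ∀ t : ℝ, Qc.eval (x t) ≠ 0 := by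
      intro t
      rw [hQfact, hR, eval_neg, eval_prod]
      simp only [eval_sub, eval_X, eval_C, neg_ne_zero]
      exact Finset.prod_ne_zero_iff.mpr fun l hl => hxne t l hl
    set g : ℝ → ℝ := fun t => ∑ l ∈ s, c l * (Real.log (Complex.normSq (x t - v l)) / 2)
      with hgdef
    have hg : ∀ t, HasDerivAt g 1 t := by
      intro t
      have hx' : HasDerivAt x (Qc.eval (x t)) t := by rw [← heval]; exact hx t
      have hterm : ∀ l ∈ s, HasDerivAt
          (fun t => c l * (Real.log (Complex.normSq (x t - v l)) / 2))
          (c l * ((Qc.eval (x t) / (x t - v l)).re)) t := fun l hl =>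
        (log_normSq_deriv (hx'.sub_const (v l)) (hxne t l hl)).const_mul (c l)
      have hsum := HasDerivAt.fun_sum hterm
      have hval : ∑ l ∈ s, c l * ((Qc.eval (x t) / (x t - v l)).re) = 1 := by
        have h2 : ∑ l ∈ s, c l * ((Qc.eval (x t) / (x t - v l)).re)
            = (∑ l ∈ s, ((c l : ℂ) / (x t - v l)) * Qc.eval (x t)).re := by
          rw [Complex.re_sum]
          refine Finset.sum_congr rfl fun l hl => ?_
          rw [show ((c l : ℂ) / (x t - v l)) * Qc.eval (x t)
              = (c l : ℂ) * (Qc.eval (x t) / (x t - v l)) by ring]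
          rw [Complex.re_ofReal_mul]
        rw [h2, ← Finset.sum_mul, hfrac (x t) (fun l hl => hA t l hl),
          inv_mul_cancel₀ (hQx t)]
        simp
      rw [← hval]
      exact hsum
    have hφ : ∀ t : ℝ, HasDerivAt (fun t => g t - t) 0 t := by
      intro t
      simpa using (hg t).fun_sub (hasDerivAt_id t)
    have hcstt := is_const_of_deriv_eq_zero (f := fun t => g t - t)
      (fun t => (hφ t).differentiableAt) (fun t => (hφ t).deriv) T 0
    have hgT : g T = g 0 := by
      have hx0 : x T = x 0 := by simpa using hper 0
      simp only [hgdef, hx0]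
    rw [hgT] at hcstt
    linarith
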